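/- Let x, y : (0,∞) → ℝ be twice differentiable with y'(q) = −q·x'(q) for every q > 0, let q₀ > 0 satisfy x'(q₀) < 0, and let L > 0. Define κ(q₀) := (x'(q₀)·y''(q₀) − y'(q₀)·x''(q₀)) / (x'(q₀)² + y'(q₀)²)^{3/2}. Then κ(q₀) = −2·q₀^{3/2} / (L·(1 + q₀²)^{3/2}) if and only if L = −2·q₀^{3/2}·x'(q₀). In other words, the price impact of the AMM at price q₀ matches that of the constant product market maker with liquidity L exactly when L = −2·q₀^{3/2}·x'(q₀). -/

import Mathlib

/-- For twice differentiable portfolio update functions with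
`y'(q) = -q·x'(q)` for all `q > 0`, `x'(q₀) < 0` and `L > 0`, the curvature of the AMM at
`q₀` equals the curvature `−2q₀^{3/2}/(L(1+q₀²)^{3/2})` of the CPMM with liquidity `L`
if and only if `L = −2·q₀^{3/2}·x'(q₀)`. -/
theorem curvature_matches_cpmm_iff (x y x' y' : ℝ → ℝ) (x'' y'' : ℝ)
    (hdx : ∀ q : ℝ, 0 < q → HasDerivAt x (x' q) q)
    (hdy : ∀ q : ℝ, 0 < q → HasDerivAt y (y' q) q)
    (hy' : ∀ q : ℝ, 0 < q → y' q = -q * x' q)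
    (q₀ : ℝ) (hq₀ : 0 < q₀)
    (hdx' : HasDerivAt x' x'' q₀) (hdy' : HasDerivAt y' y'' q₀)
    (hx'neg : x' q₀ < 0) (L : ℝ) (hL : 0 < L) :
    (x' q₀ * y'' - y' q₀ * x'') / ((x' q₀ ^ 2 + y' q₀ ^ 2) ^ ((3 : ℝ) / 2)) =
        -2 * q₀ ^ ((3 : ℝ) / 2) / (L * (1 + q₀ ^ 2) ^ ((3 : ℝ) / 2)) ↔
      L = -2 * q₀ ^ ((3 : ℝ) / 2) * x' q₀ := by
  have hy'' : y'' = -x' q₀ - q₀ * x'' := by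
    have hg : HasDerivAt (fun q => -q * x' q) (-1 * x' q₀ + -q₀ * x'') q₀ := by
      exact ((hasDerivAt_id' q₀).neg.mul hdx')
    have heq : y' =ᶠ[nhds q₀] fun q => -q * x' q := by
      filter_upwards [eventually_gt_nhds hq₀] with q hq using hy' q hq
    have h2 : HasDerivAt y' (-1 * x' q₀ + -q₀ * x'') q₀ := hg.congr_of_eventuallyEq heq
    have := hdy'.unique h2
    linarith
  set a := x' q₀ with ha
  have hY : y' q₀ = -q₀ * a := hy' q₀ hq₀
  have hnum : a * y'' - y' q₀ * x'' = -a ^ 2 := by rw [hy'', hY]; ring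
  have hden : (a ^ 2 + (y' q₀) ^ 2) ^ ((3 : ℝ) / 2)
      = (-a) ^ 3 * (1 + q₀ ^ 2) ^ ((3 : ℝ) / 2) := by
    rw [hY]
    have h1 : a ^ 2 + (-q₀ * a) ^ 2 = (-a) ^ 2 * (1 + q₀ ^ 2) := by ring
    rw [h1, Real.mul_rpow (by positivity) (by positivity)]
    congr 1
    rw [← Real.rpow_natCast (-a) 2, ← Real.rpow_mul (by linarith)]
    norm_num
  rw [hnum, hden]
  have hA : (0 : ℝ) < (1 + q₀ ^ 2) ^ ((3 : ℝ) / 2) := by positivity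
  have hQ : (0 : ℝ) < q₀ ^ ((3 : ℝ) / 2) := by positivity
  have hna : (0:ℝ) < -a := by linarith
  have hcube : (0:ℝ) < (-a) ^ 3 := pow_pos hna 3
  constructor
  · intro h
    rw [div_eq_div_iff (ne_of_gt (mul_pos hcube hA)) (ne_of_gt (mul_pos hL hA))] at h
    have h3 : -a ^ 2 * (L * (1 + q₀ ^ 2) ^ ((3 : ℝ) / 2))
        = -2 * q₀ ^ ((3 : ℝ) / 2) * ((-a) ^ 3 * (1 + q₀ ^ 2) ^ ((3 : ℝ) / 2)) := h
    have h4 : (1 + q₀ ^ 2) ^ ((3 : ℝ) / 2) * (a ^ 2) * (L - -2 * q₀ ^ ((3 : ℝ) / 2) * a) = 0 := by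
      nlinarith [h3]
    have hpos : (0:ℝ) < (1 + q₀ ^ 2) ^ ((3 : ℝ) / 2) * a ^ 2 := by
      have : (0:ℝ) < a ^ 2 := by nlinarith
      exact mul_pos hA this
    have h5 : L - -2 * q₀ ^ ((3 : ℝ) / 2) * a = 0 := by
      rcases mul_eq_zero.mp h4 with h6 | h6
      · exact absurd h6 (ne_of_gt hpos)
      · exact h6
    linarith
  · intro h
    rw [div_eq_div_iff (ne_of_gt (mul_pos hcube hA)) (ne_of_gt (mul_pos hL hA))]
    rw [h]; ring
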